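/- If 0 ≤ x ≤ 1/3, x < y ≤ 1, and x + y ≥ 1, then x(1+3y)/4 < y(1+3x)/4 ≤ y/(3(1-x)), and the second inequality is an equality if and only if x = 1/3. -/
import Mathlib


theorem stmt_3 (x y : ℝ) (hx0 : 0 ≤ x) (hx : x ≤ 1/3) (hxy : x < y) (hy : y ≤ 1)
    (hsum : 1 ≤ x + y) :
    x*(1+3*y)/4 < y*(1+3*x)/4 ∧ y*(1+3*x)/4 ≤ y/(3*(1-x)) ∧
      (y*(1+3*x)/4 = y/(3*(1-x)) ↔ x = 1/3) := by
  have hy0 : 0 < y := by linarith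
  have h1x : 0 < 1 - x := by linarith
  refine ⟨by nlinarith, ?_, ?_⟩
  · rw [div_le_div_iff₀ (by norm_num) (by positivity)]
    nlinarith [sq_nonneg (3*x - 1), mul_pos hy0 h1x]
  · rw [div_eq_div_iff (by norm_num) (by positivity)]
    constructor
    · intro h
      nlinarith [sq_nonneg (3*x - 1)]
    · intro h; subst h; ring
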